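/- arXiv:1909.05204 — 4 statements merged into one kernel-verified Lean document; each statement's English description precedes it below -/
import Mathlib

section
/- In the view-doubling protocol with minimal initial view k and maximal initial view l (k ≤ l), the overlap duration in view v between the latest node and the earliest node satisfies t(p_1, v+1) − t(p_n, v) ≥ c if and only if β(2^v + 2^k − 2^l) ≥ c; consequently, for every c ≥ 0 there exists a view v* such that for all v ≥ v* all nodes simultaneously execute view v for at least duration c. -/
/-- View doubling: the node with maximal initial view `l` enters each view first and the
node with minimal initial view `k` enters last.  The overlap in view `v` (time from the
last node entering `v` until the first node entering `v+1`) is at least `c` iff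
`β(2^v + 2^k − 2^l) ≥ c`; consequently for every `c ≥ 0` there is a view `v*` such that
for all `v ≥ v*` all nodes execute view `v` simultaneously for at least duration `c`. -/
theorem view_doubling_overlap (β c : ℝ) (hβ : 0 < β) (k l : ℕ) (hkl : k ≤ l) :
    (∀ v : ℕ,
      β * ((2 : ℝ) ^ (v + 1) - 2 ^ l) - β * ((2 : ℝ) ^ v - 2 ^ k) ≥ c ↔
        β * ((2 : ℝ) ^ v + 2 ^ k - 2 ^ l) ≥ c) ∧
    (0 ≤ c → ∃ vstar : ℕ, ∀ v ≥ vstar, β * ((2 : ℝ) ^ v + 2 ^ k - 2 ^ l) ≥ c) := by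
  constructor
  · intro v
    have : β * ((2 : ℝ) ^ (v + 1) - 2 ^ l) - β * ((2 : ℝ) ^ v - 2 ^ k)
        = β * ((2 : ℝ) ^ v + 2 ^ k - 2 ^ l) := by ring
    rw [this]
  · intro hc
    obtain ⟨vstar, hv⟩ := pow_unbounded_of_one_lt (c / β + 2 ^ l) (by norm_num : (1:ℝ) < 2)
    refine ⟨vstar, fun v hvv => ?_⟩
    have h2 : (c / β + 2 ^ l : ℝ) ≤ 2 ^ v :=
      le_trans hv.le (pow_le_pow_right₀ (by norm_num) hvv)
    have hk : (0:ℝ) ≤ 2 ^ k := by positivity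
    have : c / β ≤ 2 ^ v + 2 ^ k - 2 ^ l := by linarith
    calc c = β * (c / β) := by field_simp
    _ ≤ β * ((2 : ℝ) ^ v + 2 ^ k - 2 ^ l) := by
        exact mul_le_mul_of_nonneg_left this hβ.le
end

section
/- In the view-doubling protocol, if wishToAdvance is invoked at every interval γ with 0 < γ ≤ β, then at every time the wish counter is at least the current view counter; hence every view transition results in a proposeView signal. -/
/-- In the view-doubling protocol with `wishToAdvance` invoked every `γ` with
`0 < γ ≤ β`: when the node's view counter reaches `v` (after elapsed time
`∑_{j=r}^{v-1} β·2^j` since its start at view `r`), the wish counter (the number of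
whole `γ`-intervals elapsed) is at least `v − r`; hence every view transition results
in a `proposeView` signal. -/
theorem view_doubling_wish_dominates (β γ : ℝ) (hβ : 0 < β) (hγ : 0 < γ)
    (hγβ : γ ≤ β) (r v : ℕ) (hrv : r ≤ v) :
    v - r ≤ ⌊(∑ j ∈ Finset.Ico r v, β * 2 ^ j) / γ⌋₊ := by
  apply Nat.le_floor
  rw [le_div_iff₀ hγ]
  calc ((v - r : ℕ) : ℝ) * γ = ∑ j ∈ Finset.Ico r v, γ := by
        rw [Finset.sum_const, Nat.card_Ico, nsmul_eq_mul, mul_comm]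
    _ ≤ ∑ j ∈ Finset.Ico r v, β * 2 ^ j := by
        apply Finset.sum_le_sum
        intro j _
        calc γ ≤ β := hγβ
          _ = β * 1 := (mul_one β).symm
          _ ≤ β * 2 ^ j := by
            apply mul_le_mul_of_nonneg_left _ hβ.le
            exact one_le_pow₀ one_le_two
end

section
/- After GST, in the broadcast-based synchronizer, if some honest node enters view v at time t, then every honest node enters view v by time t + 2Δ. -/
/-- Broadcast-based synchronizer after GST.  If an honest node enters view `v` at time
`t` (i.e., `2f + 1` nodes have multicast `newRound(v)` by time `t`), then:
(i) at least `f + 1` honest nodes have multicast `newRound(v)` by `t`;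
(ii) by `t + Δ` every honest node has multicast `newRound(v)`;
(iii) by `t + 2Δ` every honest node enters view `v`. -/
theorem broadcast_sync_bound {Node : Type*} [DecidableEq Node]
    (Nodes B : Finset Node) (f : ℕ) (Δ t : ℝ) (hΔ : 0 ≤ Δ)
    (hB : B ⊆ Nodes) (hBcard : B.card ≤ f) (hn : 3 * f + 1 ≤ Nodes.card)
    (multicastBy entersBy : Node → ℝ → Prop)
    -- the 2f+1 senders whose messages the first honest node received by time t
    (hsent : ∃ T ⊆ Nodes, 2 * f + 1 ≤ T.card ∧ ∀ q ∈ T, multicastBy q t)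
    -- rule: upon receiving f+1 newRound(v) messages (delivered within Δ),
    -- an honest node multicasts newRound(v)
    (hrule1 : ∀ p ∈ Nodes \ B, ∀ s : ℝ,
      (∃ T ⊆ Nodes, f + 1 ≤ T.card ∧ ∀ q ∈ T, multicastBy q s) →
        multicastBy p (s + Δ))
    -- rule: upon receiving 2f+1 newRound(v) messages (delivered within Δ),
    -- an honest node enters view v
    (hrule2 : ∀ p ∈ Nodes \ B, ∀ s : ℝ,
      (∃ T ⊆ Nodes, 2 * f + 1 ≤ T.card ∧ ∀ q ∈ T, multicastBy q s) →
        entersBy p (s + Δ)) :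
    (∃ T ⊆ Nodes \ B, f + 1 ≤ T.card ∧ ∀ q ∈ T, multicastBy q t) ∧
    (∀ p ∈ Nodes \ B, multicastBy p (t + Δ)) ∧
    (∀ p ∈ Nodes \ B, entersBy p (t + Δ + Δ)) := by
  obtain ⟨T, hT, hTcard, hTm⟩ := hsent
  have hsub : T \ B ⊆ Nodes \ B := Finset.sdiff_subset_sdiff hT (le_refl _)
  have hcard : f + 1 ≤ (T \ B).card := by
    have := Finset.le_card_sdiff B T
    omega
  have h1 : ∃ T ⊆ Nodes \ B, f + 1 ≤ T.card ∧ ∀ q ∈ T, multicastBy q t :=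
    ⟨T \ B, hsub, hcard, fun q hq => hTm q (Finset.mem_sdiff.mp hq).1⟩
  have h2 : ∀ p ∈ Nodes \ B, multicastBy p (t + Δ) := fun p hp =>
    hrule1 p hp t ⟨T, hT, by omega, hTm⟩
  refine ⟨h1, h2, fun p hp => hrule2 p hp (t + Δ) ?_⟩
  refine ⟨Nodes \ B, Finset.sdiff_subset, ?_, h2⟩
  have := Finset.le_card_sdiff B Nodes
  omega
end

section
/- Given β > 0, k ≤ l, and c ≥ 0, the minimal view v* with β(2^{v*} + 2^k − 2^l) ≥ c satisfies 2^{v*} ≥ c/β + 2^l − 2^k, and the synchronization latency t(p_firstnode, v*) = β(2^{v*} − 2^k) grows without bound as l − k → ∞ for fixed c > β·2^k. -/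
/-- View doubling latency is unbounded.  (i) Any view `v` achieving overlap `c`, i.e.,
`β(2^v + 2^k − 2^l) ≥ c`, satisfies `2^v ≥ c/β + 2^l − 2^k`.  (ii) For every bound `M`
there are initial views `k ≤ l` such that the minimal view `v*` achieving overlap `c`
has synchronization latency `t(p_k, v*) = β(2^{v*} − 2^k) ≥ M`. -/
theorem view_doubling_latency_unbounded (β c : ℝ) (hβ : 0 < β) (hc : 0 ≤ c) :
    (∀ k l v : ℕ, k ≤ l → β * ((2 : ℝ) ^ v + 2 ^ k - 2 ^ l) ≥ c →
      (2 : ℝ) ^ v ≥ c / β + 2 ^ l - 2 ^ k) ∧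
    (∀ M : ℝ, ∃ k l : ℕ, k ≤ l ∧ ∀ v : ℕ,
      (β * ((2 : ℝ) ^ v + 2 ^ k - 2 ^ l) ≥ c ∧
        ∀ w : ℕ, β * ((2 : ℝ) ^ w + 2 ^ k - 2 ^ l) ≥ c → v ≤ w) →
      β * ((2 : ℝ) ^ v - 2 ^ k) ≥ M) := by
  constructor
  · intro k l v _ h
    have h2 : c / β ≤ (2 : ℝ) ^ v + 2 ^ k - 2 ^ l :=
      (div_le_iff₀' hβ).mpr h
    linarith
  · intro M
    obtain ⟨l, hl⟩ := pow_unbounded_of_one_lt ((M + 2 * β + c) / β) (by norm_num : (1:ℝ) < 2)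
    refine ⟨0, l, Nat.zero_le l, fun v ⟨h1, _⟩ => ?_⟩
    have h2 : c / β ≤ (2 : ℝ) ^ v + 2 ^ 0 - 2 ^ l := (div_le_iff₀' hβ).mpr h1
    have h3 : (M + 2 * β + c) / β < (2 : ℝ) ^ l := hl
    have h4 : M + 2 * β + c < β * 2 ^ l := (div_lt_iff₀' hβ).mp h3
    have h5 : c ≤ β * ((2 : ℝ) ^ v + 2 ^ 0 - 2 ^ l) := h1
    nlinarith [h5, h4, hβ.le]
end
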